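/- Second-order symmetrization bound (inequality (part1) in the proof of Theorem 2.1): For all U, V ∈ ℝ^{n×r} with ‖U‖_F ≤ σ and ‖V‖_F ≤ σ, it holds that ‖∇f(UVᵀ) + ∇f(VUᵀ) − 2∇f((UVᵀ + VUᵀ)/2)‖_F ≤ L_0 σ² ‖U − V‖_F². -/

import Mathlib

open Matrix
open scoped BigOperators

noncomputable section

/-- Frobenius inner product of two real matrices. -/
def frobInner {α β : Type*} [Fintype α] [Fintype β] (X Y : Matrix α β ℝ) : ℝ :=
  ∑ i, ∑ j, X i j * Y i j

/-- Frobenius norm of a real matrix. -/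
def frobNorm {α β : Type*} [Fintype α] [Fintype β] (X : Matrix α β ℝ) : ℝ :=
  Real.sqrt (∑ i, ∑ j, (X i j) ^ 2)

/-- Euclidean norm of a real vector. -/
def vecNorm {α : Type*} [Fintype α] (v : α → ℝ) : ℝ :=
  Real.sqrt (∑ i, (v i) ^ 2)

/-- The linear map `𝒜(X) = (⟨A 1, X⟩, …, ⟨A m, X⟩)`. -/
def Aop {n m : ℕ} (A : Fin m → Matrix (Fin n) (Fin n) ℝ)
    (X : Matrix (Fin n) (Fin n) ℝ) : Fin m → ℝ :=
  fun i => frobInner (A i) X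

/-- `s_A = Σ_i ‖A_i‖_F²`. -/
def sA {n m : ℕ} (A : Fin m → Matrix (Fin n) (Fin n) ℝ) : ℝ :=
  ∑ i, (frobNorm (A i)) ^ 2

/-- `(U, V, λ)` is an ε-KKT point of the penalized problem
`min f(UVᵀ) + (γ/2)‖U-V‖² s.t. 𝒜(UVᵀ) = b`, where `grad` denotes the gradient of `f`. -/
def IsPenEpsKKT {n m r : ℕ} (grad : Matrix (Fin n) (Fin n) ℝ → Matrix (Fin n) (Fin n) ℝ)
    (A : Fin m → Matrix (Fin n) (Fin n) ℝ) (b : Fin m → ℝ) (γ ε : ℝ)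
    (U V : Matrix (Fin n) (Fin r) ℝ) (lam : Fin m → ℝ) : Prop :=
  frobNorm (grad (U * Vᵀ) * V + γ • (U - V) + ∑ i, lam i • (A i * V)) ≤ ε ∧
  frobNorm (grad (V * Uᵀ) * U + γ • (V - U) + ∑ i, lam i • (A i * U)) ≤ ε ∧
  vecNorm (fun i => Aop A (U * Vᵀ) i - b i) ≤ ε

/-- `(U, λ)` is an ε-KKT point of the Burer–Monteiro problem
`min f(UUᵀ) s.t. 𝒜(UUᵀ) = b`, where `grad` denotes the gradient of `f`. -/
def IsBMEpsKKT {n m r : ℕ} (grad : Matrix (Fin n) (Fin n) ℝ → Matrix (Fin n) (Fin n) ℝ)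
    (A : Fin m → Matrix (Fin n) (Fin n) ℝ) (b : Fin m → ℝ) (ε : ℝ)
    (U : Matrix (Fin n) (Fin r) ℝ) (lam : Fin m → ℝ) : Prop :=
  frobNorm ((2 : ℝ) • (grad (U * Uᵀ) * U) + ∑ i, lam i • (A i * U)) ≤ ε ∧
  vecNorm (fun i => Aop A (U * Uᵀ) i - b i) ≤ ε

/-- The augmented Lagrangian `L_ρ(U,V,λ)` of the penalized problem. -/
def augL {n m r : ℕ} (f : Matrix (Fin n) (Fin n) ℝ → ℝ)
    (A : Fin m → Matrix (Fin n) (Fin n) ℝ) (b : Fin m → ℝ) (ρ γ : ℝ)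
    (U V : Matrix (Fin n) (Fin r) ℝ) (lam : Fin m → ℝ) : ℝ :=
  f (U * Vᵀ) + γ / 2 * (frobNorm (U - V)) ^ 2
    + ∑ i, lam i * (Aop A (U * Vᵀ) i - b i)
    + ρ / 2 * (vecNorm (fun i => Aop A (U * Vᵀ) i - b i)) ^ 2

/-- The level set `S_β` of the penalty function. -/
def Sset {n m r : ℕ} (f : Matrix (Fin n) (Fin n) ℝ → ℝ)
    (A : Fin m → Matrix (Fin n) (Fin n) ℝ) (b : Fin m → ℝ) (ρ₀ β : ℝ) :
    Set (Matrix (Fin n) (Fin r) ℝ × Matrix (Fin n) (Fin r) ℝ) :=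
  {p | f (p.1 * p.2ᵀ) + ρ₀ / 2 * (frobNorm (p.1 - p.2)) ^ 2
      + ρ₀ / 2 * (vecNorm (fun i => Aop A (p.1 * p.2ᵀ) i - b i)) ^ 2 ≤ β}

/-- `𝒞(U)`: the `nr × m` matrix whose `i`-th column is the vectorization of `A_i U`. -/
def Cmat {n m r : ℕ} (A : Fin m → Matrix (Fin n) (Fin n) ℝ)
    (U : Matrix (Fin n) (Fin r) ℝ) : Matrix (Fin n × Fin r) (Fin m) ℝ :=
  Matrix.of fun p i => (A i * U) p.1 p.2

/-- Smallest singular value of a real matrix, as the infimum of `‖Mx‖` over unit vectors. -/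
def sigmaMin {α β : Type*} [Fintype α] [Fintype β] (M : Matrix α β ℝ) : ℝ :=
  sInf {s | ∃ x : β → ℝ, vecNorm x = 1 ∧ s = vecNorm (M.mulVec x)}

/-- Norm of the full gradient of the augmented Lagrangian at `(U, V, λ)`
(for symmetric `f`, with `grad` the gradient of `f`). -/
def gradAugLNorm {n m r : ℕ} (grad : Matrix (Fin n) (Fin n) ℝ → Matrix (Fin n) (Fin n) ℝ)
    (A : Fin m → Matrix (Fin n) (Fin n) ℝ) (b : Fin m → ℝ) (ρ γ : ℝ)
    (U V : Matrix (Fin n) (Fin r) ℝ) (lam : Fin m → ℝ) : ℝ :=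
  Real.sqrt
    ((frobNorm (grad (U * Vᵀ) * V + γ • (U - V)
        + ∑ i, (lam i + ρ * (Aop A (U * Vᵀ) i - b i)) • (A i * V))) ^ 2
      + (frobNorm (grad (V * Uᵀ) * U + γ • (V - U)
        + ∑ i, (lam i + ρ * (Aop A (U * Vᵀ) i - b i)) • (A i * U))) ^ 2
      + (vecNorm (fun i => Aop A (U * Vᵀ) i - b i)) ^ 2)

/-- Distance between two primal-dual triples, induced by the Frobenius/Euclidean norms. -/
def tripDist {n m r : ℕ}
    (p q : Matrix (Fin n) (Fin r) ℝ × Matrix (Fin n) (Fin r) ℝ × (Fin m → ℝ)) : ℝ :=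
  Real.sqrt ((frobNorm (p.1 - q.1)) ^ 2 + (frobNorm (p.2.1 - q.2.1)) ^ 2
    + (vecNorm (fun i => p.2.2 i - q.2.2 i)) ^ 2)

/-- The set `𝒲` of KKT points of the penalized problem. -/
def KKTset {n m : ℕ} (r : ℕ) (grad : Matrix (Fin n) (Fin n) ℝ → Matrix (Fin n) (Fin n) ℝ)
    (A : Fin m → Matrix (Fin n) (Fin n) ℝ) (b : Fin m → ℝ) (γ : ℝ) :
    Set (Matrix (Fin n) (Fin r) ℝ × Matrix (Fin n) (Fin r) ℝ × (Fin m → ℝ)) :=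
  {p | IsPenEpsKKT grad A b γ 0 p.1 p.2.1 p.2.2}

section FrobHelpers
variable {a b c : Type*} [Fintype a] [Fintype b] [Fintype c]

attribute [local instance] Matrix.frobeniusSeminormedAddCommGroup Matrix.frobeniusIsBoundedSMul Matrix.frobeniusNormSMulClass

lemma frobNorm_eq_norm (X : Matrix a b ℝ) : frobNorm X = ‖X‖ := by
  rw [Matrix.frobenius_norm_def, frobNorm, Real.sqrt_eq_rpow]
  congr 1
  refine Finset.sum_congr rfl fun i _ => Finset.sum_congr rfl fun j _ => ?_
  rw [show (2:ℝ) = ((2:ℕ):ℝ) by norm_num, Real.rpow_natCast, Real.norm_eq_abs, sq_abs]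

lemma frobNorm_nonneg (X : Matrix a b ℝ) : 0 ≤ frobNorm X := Real.sqrt_nonneg _

lemma frobNorm_smul (r : ℝ) (X : Matrix a b ℝ) : frobNorm (r • X) = |r| * frobNorm X := by
  rw [frobNorm_eq_norm, frobNorm_eq_norm, norm_smul, Real.norm_eq_abs]

lemma frobNorm_add_le (X Y : Matrix a b ℝ) : frobNorm (X + Y) ≤ frobNorm X + frobNorm Y := by
  rw [frobNorm_eq_norm, frobNorm_eq_norm, frobNorm_eq_norm]; exact norm_add_le X Y

lemma frobNorm_sub_le (X Y : Matrix a b ℝ) : frobNorm (X - Y) ≤ frobNorm X + frobNorm Y := by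
  rw [frobNorm_eq_norm, frobNorm_eq_norm, frobNorm_eq_norm]; exact norm_sub_le X Y

lemma frobNorm_transpose (X : Matrix a b ℝ) : frobNorm Xᵀ = frobNorm X := by
  rw [frobNorm_eq_norm, frobNorm_eq_norm]; exact Matrix.frobenius_norm_transpose X

lemma frobNorm_mul_le (X : Matrix a b ℝ) (Y : Matrix b c ℝ) :
    frobNorm (X * Y) ≤ frobNorm X * frobNorm Y := by
  rw [frobNorm_eq_norm, frobNorm_eq_norm, frobNorm_eq_norm]
  exact Matrix.frobenius_norm_mul X Y

lemma frobInner_self (X : Matrix a b ℝ) : frobInner X X = frobNorm X ^ 2 := by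
  rw [frobNorm, Real.sq_sqrt (by positivity)]
  simp [frobInner, sq]

lemma frobInner_le (X Y : Matrix a b ℝ) : frobInner X Y ≤ frobNorm X * frobNorm Y := by
  have h := Finset.sum_mul_sq_le_sq_mul_sq Finset.univ
    (fun p : a × b => X p.1 p.2) (fun p : a × b => Y p.1 p.2)
  have e1 : frobInner X Y = ∑ p : a × b, X p.1 p.2 * Y p.1 p.2 := by
    rw [frobInner]; exact (Fintype.sum_prod_type (f := fun p : a × b => X p.1 p.2 * Y p.1 p.2)).symm
  calc frobInner X Y ≤ |frobInner X Y| := le_abs_self _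
    _ = Real.sqrt ((frobInner X Y) ^ 2) := (Real.sqrt_sq_eq_abs _).symm
    _ ≤ Real.sqrt ((∑ p : a × b, X p.1 p.2 ^ 2) * (∑ p : a × b, Y p.1 p.2 ^ 2)) := by
        rw [e1]; exact Real.sqrt_le_sqrt h
    _ = frobNorm X * frobNorm Y := by
        rw [Real.sqrt_mul (by positivity), frobNorm, frobNorm,
          show ∑ i : a, ∑ j : b, X i j ^ 2 = ∑ p : a × b, X p.1 p.2 ^ 2 from
            (Fintype.sum_prod_type (f := fun p : a × b => X p.1 p.2 ^ 2)).symm,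
          show ∑ i : a, ∑ j : b, Y i j ^ 2 = ∑ p : a × b, Y p.1 p.2 ^ 2 from
            (Fintype.sum_prod_type (f := fun p : a × b => Y p.1 p.2 ^ 2)).symm]

end FrobHelpers

/-- inequality (part1) in the proof of Theorem 2.1:
second-order symmetrization bound. -/
theorem second_order_symmetrization_bound
    (n r : ℕ) (hn : 0 < n) (hr : 0 < r)
    (f : Matrix (Fin n) (Fin n) ℝ → ℝ)
    (grad : Matrix (Fin n) (Fin n) ℝ → Matrix (Fin n) (Fin n) ℝ)
    (hgrad : ∀ X H : Matrix (Fin n) (Fin n) ℝ,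
      HasDerivAt (fun t : ℝ => f (X + t • H)) (frobInner (grad X) H) 0)
    (hgradCont : Continuous grad)
    (hess : Matrix (Fin n) (Fin n) ℝ → Matrix (Fin n) (Fin n) ℝ → Matrix (Fin n) (Fin n) ℝ)
    (hhess : ∀ X H : Matrix (Fin n) (Fin n) ℝ, ∀ i j,
      HasDerivAt (fun t : ℝ => grad (X + t • H) i j) (hess X H i j) 0)
    (hhessCont : ∀ H : Matrix (Fin n) (Fin n) ℝ, Continuous (fun X => hess X H))
    (σ L0 : ℝ) (hσ : 0 < σ) (hL0 : 0 < L0)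
    (hhessLip : ∀ X Y H : Matrix (Fin n) (Fin n) ℝ, frobNorm X ≤ σ ^ 2 → frobNorm Y ≤ σ ^ 2 →
      frobNorm (hess X H - hess Y H) ≤ L0 * frobNorm H * frobNorm (X - Y))
    (U V : Matrix (Fin n) (Fin r) ℝ) (hU : frobNorm U ≤ σ) (hV : frobNorm V ≤ σ) :
    frobNorm (grad (U * Vᵀ) + grad (V * Uᵀ) - (2 : ℝ) • grad ((2 : ℝ)⁻¹ • (U * Vᵀ + V * Uᵀ)))
      ≤ L0 * σ ^ 2 * (frobNorm (U - V)) ^ 2 := by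
  set M : Matrix (Fin n) (Fin n) ℝ := U * Vᵀ with hM
  set N : Matrix (Fin n) (Fin n) ℝ := V * Uᵀ with hN
  set C : Matrix (Fin n) (Fin n) ℝ := (2 : ℝ)⁻¹ • (M + N) with hC
  set D : Matrix (Fin n) (Fin n) ℝ := (2 : ℝ)⁻¹ • (M - N) with hD
  set W : Matrix (Fin n) (Fin n) ℝ := grad M + grad N - (2 : ℝ) • grad C with hW
  -- norm bounds
  have hMnorm : frobNorm M ≤ σ ^ 2 := by
    calc frobNorm M ≤ frobNorm U * frobNorm Vᵀ := frobNorm_mul_le _ _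
      _ = frobNorm U * frobNorm V := by rw [frobNorm_transpose]
      _ ≤ σ * σ := mul_le_mul hU hV (frobNorm_nonneg _) hσ.le
      _ = σ ^ 2 := (sq σ).symm
  have hNnorm : frobNorm N ≤ σ ^ 2 := by
    calc frobNorm N ≤ frobNorm V * frobNorm Uᵀ := frobNorm_mul_le _ _
      _ = frobNorm V * frobNorm U := by rw [frobNorm_transpose]
      _ ≤ σ * σ := mul_le_mul hV hU (frobNorm_nonneg _) hσ.le
      _ = σ ^ 2 := (sq σ).symm
  have hDle : frobNorm D ≤ σ * frobNorm (U - V) := by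
    have e : M - N = (U - V) * Vᵀ - V * (U - V)ᵀ := by
      rw [hM, hN, Matrix.sub_mul, Matrix.transpose_sub, Matrix.mul_sub]; abel
    have h1 : frobNorm ((U - V) * Vᵀ) ≤ frobNorm (U - V) * frobNorm V := by
      calc frobNorm ((U - V) * Vᵀ) ≤ frobNorm (U - V) * frobNorm Vᵀ := frobNorm_mul_le _ _
        _ = frobNorm (U - V) * frobNorm V := by rw [frobNorm_transpose]
    have h2 : frobNorm (V * (U - V)ᵀ) ≤ frobNorm V * frobNorm (U - V) := by
      calc frobNorm (V * (U - V)ᵀ) ≤ frobNorm V * frobNorm (U - V)ᵀ := frobNorm_mul_le _ _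
        _ = frobNorm V * frobNorm (U - V) := by rw [frobNorm_transpose]
    have h3 : frobNorm (M - N) ≤ 2 * (frobNorm V * frobNorm (U - V)) := by
      rw [e]
      refine (frobNorm_sub_le _ _).trans ?_
      linarith
    have h4 : frobNorm D = 2⁻¹ * frobNorm (M - N) := by
      rw [hD, frobNorm_smul, abs_of_nonneg (by norm_num : (0:ℝ) ≤ (2:ℝ)⁻¹)]
    have h5 : frobNorm V * frobNorm (U - V) ≤ σ * frobNorm (U - V) :=
      mul_le_mul_of_nonneg_right hV (frobNorm_nonneg _)
    linarith
  have hball : ∀ t ∈ Set.Icc (0:ℝ) 1,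
      frobNorm (C + t • D) ≤ σ ^ 2 ∧ frobNorm (C - t • D) ≤ σ ^ 2 := by
    intro t ht
    have ht0 : (0:ℝ) ≤ (1 + t) / 2 := by linarith [ht.1]
    have ht1 : (0:ℝ) ≤ (1 - t) / 2 := by linarith [ht.2]
    have e1 : C + t • D = ((1 + t) / 2) • M + ((1 - t) / 2) • N := by
      rw [hC, hD]; module
    have e2 : C - t • D = ((1 - t) / 2) • M + ((1 + t) / 2) • N := by
      rw [hC, hD]; module
    constructor
    · rw [e1]
      refine (frobNorm_add_le _ _).trans ?_
      rw [frobNorm_smul, frobNorm_smul, abs_of_nonneg ht0, abs_of_nonneg ht1]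
      have b1 : (1 + t) / 2 * frobNorm M ≤ (1 + t) / 2 * σ ^ 2 :=
        mul_le_mul_of_nonneg_left hMnorm ht0
      have b2 : (1 - t) / 2 * frobNorm N ≤ (1 - t) / 2 * σ ^ 2 :=
        mul_le_mul_of_nonneg_left hNnorm ht1
      nlinarith
    · rw [e2]
      refine (frobNorm_add_le _ _).trans ?_
      rw [frobNorm_smul, frobNorm_smul, abs_of_nonneg ht0, abs_of_nonneg ht1]
      have b1 : (1 - t) / 2 * frobNorm M ≤ (1 - t) / 2 * σ ^ 2 :=
        mul_le_mul_of_nonneg_left hMnorm ht1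
      have b2 : (1 + t) / 2 * frobNorm N ≤ (1 + t) / 2 * σ ^ 2 :=
        mul_le_mul_of_nonneg_left hNnorm ht0
      nlinarith
  -- derivative of entries
  have hder1 : ∀ (t₀ : ℝ) (i j : Fin n),
      HasDerivAt (fun t : ℝ => grad (C + t • D) i j) (hess (C + t₀ • D) D i j) t₀ := by
    intro t₀ i j
    have base := hhess (C + t₀ • D) D i j
    have base' : HasDerivAt (fun s : ℝ => grad ((C + t₀ • D) + s • D) i j)
        (hess (C + t₀ • D) D i j) (t₀ - t₀) := by rw [sub_self]; exact base
    have comp := base'.comp_sub_const t₀ t₀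
    have key : (fun t : ℝ => grad ((C + t₀ • D) + (t - t₀) • D) i j)
        = fun t : ℝ => grad (C + t • D) i j := by
      funext t
      have : (C + t₀ • D) + (t - t₀) • D = C + t • D := by module
      rw [this]
    rwa [key] at comp
  have hder2 : ∀ (t₀ : ℝ) (i j : Fin n),
      HasDerivAt (fun t : ℝ => grad (C - t • D) i j) (-(hess (C - t₀ • D) D i j)) t₀ := by
    intro t₀ i j
    have base := hhess (C - t₀ • D) D i j
    have base' : HasDerivAt (fun s : ℝ => grad ((C - t₀ • D) + s • D) i j)
        (hess (C - t₀ • D) D i j) (t₀ - t₀) := by rw [sub_self]; exact base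
    have comp := base'.comp_const_sub t₀ t₀
    have key : (fun t : ℝ => grad ((C - t₀ • D) + (t₀ - t) • D) i j)
        = fun t : ℝ => grad (C - t • D) i j := by
      funext t
      have : (C - t₀ • D) + (t₀ - t) • D = C - t • D := by module
      rw [this]
    rwa [key] at comp
  set h : ℝ → ℝ := fun t =>
    ∑ i, ∑ j, W i j * (grad (C + t • D) i j + grad (C - t • D) i j - 2 * grad C i j) with hh
  have hderh : ∀ t₀ : ℝ,
      HasDerivAt h (frobInner W (hess (C + t₀ • D) D - hess (C - t₀ • D) D)) t₀ := by
    intro t₀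
    have entry : ∀ i j : Fin n,
        HasDerivAt (fun t : ℝ =>
            W i j * (grad (C + t • D) i j + grad (C - t • D) i j - 2 * grad C i j))
          (W i j * (hess (C + t₀ • D) D i j + -(hess (C - t₀ • D) D i j))) t₀ :=
      fun i j => (((hder1 t₀ i j).add (hder2 t₀ i j)).sub_const _).const_mul _
    have hsum : HasDerivAt h
        (∑ i, ∑ j, W i j * (hess (C + t₀ • D) D i j + -(hess (C - t₀ • D) D i j))) t₀ := by
      rw [hh]
      exact HasDerivAt.fun_sum fun i _ => HasDerivAt.fun_sum fun j _ => entry i j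
    have e : frobInner W (hess (C + t₀ • D) D - hess (C - t₀ • D) D)
        = ∑ i, ∑ j, W i j * (hess (C + t₀ • D) D i j + -(hess (C - t₀ • D) D i j)) := by
      delta frobInner
      refine Finset.sum_congr rfl fun i _ => Finset.sum_congr rfl fun j _ => ?_
      rw [Matrix.sub_apply]; ring
    rw [e]
    exact hsum
  set c : ℝ := L0 * frobNorm W * frobNorm D ^ 2 with hc
  have hbound : ∀ t ∈ Set.Icc (0:ℝ) 1,
      frobInner W (hess (C + t • D) D - hess (C - t • D) D) ≤ 2 * c * t := by
    intro t ht
    have hcs := frobInner_le W (hess (C + t • D) D - hess (C - t • D) D)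
    have hlip := hhessLip (C + t • D) (C - t • D) D (hball t ht).1 (hball t ht).2
    have ediff : (C + t • D) - (C - t • D) = (2 * t) • D := by module
    rw [ediff] at hlip
    rw [frobNorm_smul (2 * t) D, abs_of_nonneg (by linarith [ht.1] : (0:ℝ) ≤ 2 * t)] at hlip
    have hmul := mul_le_mul_of_nonneg_left hlip (frobNorm_nonneg W)
    calc frobInner W (hess (C + t • D) D - hess (C - t • D) D)
        ≤ frobNorm W * frobNorm (hess (C + t • D) D - hess (C - t • D) D) := hcs
      _ ≤ frobNorm W * (L0 * frobNorm D * (2 * t * frobNorm D)) := hmul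
      _ = 2 * c * t := by rw [hc]; ring
  set k : ℝ → ℝ := fun t => h t - c * t ^ 2 with hk
  have hderk : ∀ t : ℝ, HasDerivAt k
      (frobInner W (hess (C + t • D) D - hess (C - t • D) D) - 2 * c * t) t := by
    intro t
    have hp : HasDerivAt (fun t : ℝ => c * t ^ 2) (2 * c * t) t := by
      have := (hasDerivAt_pow 2 t).const_mul c
      refine this.congr_deriv ?_
      push_cast
      ring
    exact (hderh t).sub hp
  have hkdiff : Differentiable ℝ k := fun t => (hderk t).differentiableAt
  have anti : AntitoneOn k (Set.Icc 0 1) := by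
    refine antitoneOn_of_deriv_nonpos (convex_Icc 0 1) hkdiff.continuous.continuousOn
      hkdiff.differentiableOn ?_
    intro x hx
    rw [interior_Icc] at hx
    rw [(hderk x).deriv]
    have := hbound x ⟨hx.1.le, hx.2.le⟩
    linarith
  have hk10 : k 1 ≤ k 0 :=
    anti (Set.left_mem_Icc.2 zero_le_one) (Set.right_mem_Icc.2 zero_le_one) zero_le_one
  have h0 : h 0 = 0 := by
    rw [hh]
    simp only [zero_smul, add_zero, sub_zero]
    exact Finset.sum_eq_zero fun i _ => Finset.sum_eq_zero fun j _ => by ring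
  have hWij : ∀ i j, W i j = grad M i j + grad N i j - 2 * grad C i j := by
    intro i j
    rw [hW]
    simp [Matrix.add_apply, Matrix.sub_apply, Matrix.smul_apply, smul_eq_mul]
  have h1 : h 1 = frobNorm W ^ 2 := by
    rw [← frobInner_self]
    have e1 : C + (1:ℝ) • D = M := by rw [hC, hD]; module
    have e2 : C - (1:ℝ) • D = N := by rw [hC, hD]; module
    rw [hh]
    show (∑ i, ∑ j, W i j * (grad (C + (1:ℝ) • D) i j + grad (C - (1:ℝ) • D) i j
        - 2 * grad C i j)) = frobInner W W
    rw [e1, e2, frobInner]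
    exact Finset.sum_congr rfl fun i _ => Finset.sum_congr rfl fun j _ => by
      rw [hWij i j]
  have key : frobNorm W ^ 2 ≤ c := by
    have e0 : k 0 = 0 := by rw [hk]; simp [h0]
    have e1' : k 1 = frobNorm W ^ 2 - c := by rw [hk]; simp [h1]
    linarith [hk10, e0.symm ▸ hk10]
  have hDsq : frobNorm D ^ 2 ≤ σ ^ 2 * frobNorm (U - V) ^ 2 := by
    nlinarith [frobNorm_nonneg D, frobNorm_nonneg (U - V), hDle, hσ]
  rcases eq_or_lt_of_le (frobNorm_nonneg W) with h0' | hpos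
  · rw [← h0']
    positivity
  · have hWle : frobNorm W ≤ L0 * frobNorm D ^ 2 := by
      rw [hc] at key
      nlinarith [key, hpos]
    calc frobNorm W ≤ L0 * frobNorm D ^ 2 := hWle
      _ ≤ L0 * (σ ^ 2 * frobNorm (U - V) ^ 2) := mul_le_mul_of_nonneg_left hDsq hL0.le
      _ = L0 * σ ^ 2 * frobNorm (U - V) ^ 2 := by ring
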